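/- The inverse of the lower-triangular matrix with (i,j) entry binom(2j+1, 2i+1) for 0 ≤ i, j ≤ m is the matrix with (i,j) entry binom(2j+1, 2i+1)·E_{2j-2i}, where E_n are the Euler numbers. -/

import Mathlib

open Finset

lemma odd_binom_sum_lemma (E : ℕ → ℚ)
    (hE : ∀ n, ∑ k ∈ Finset.range (n + 1), ((2 * n).choose (2 * k) : ℚ) * E (2 * k)
      = if n = 0 then 1 else 0)
    (m i j : ℕ) (hi : i ≤ m) (hj : j ≤ m) :
    ∑ k ∈ Finset.range (m + 1),
      ((2 * k + 1).choose (2 * i + 1) : ℚ) *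
        (((2 * j + 1).choose (2 * k + 1) : ℚ) * E (2 * j - 2 * k))
      = if i = j then 1 else 0 := by
  by_cases hij : i ≤ j
  · have hsub : Finset.Icc i j ⊆ Finset.range (m + 1) := by
      intro k hk
      simp only [Finset.mem_Icc] at hk
      simp only [Finset.mem_range]
      omega
    rw [← Finset.sum_subset hsub]
    · rw [show Finset.Icc i j = Finset.Ico i (j+1) by rw [Finset.Ico_add_one_right_eq_Icc],
        Finset.sum_Ico_eq_sum_range]
      have hlen : j + 1 - i = (j - i) + 1 := by omega
      rw [hlen]
      set n := j - i with hn
      have hcongr : ∀ d ∈ Finset.range (n + 1),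
          ((2 * (i + d) + 1).choose (2 * i + 1) : ℚ) *
            (((2 * j + 1).choose (2 * (i + d) + 1) : ℚ) * E (2 * j - 2 * (i + d)))
          = ((2 * j + 1).choose (2 * i + 1) : ℚ) *
            (((2 * n).choose (2 * (n - d)) : ℚ) * E (2 * (n - d))) := by
        intro d hd
        simp only [Finset.mem_range] at hd
        have hd' : d ≤ n := by omega
        have key : (2 * j + 1).choose (2 * (i + d) + 1) * ((2 * (i + d) + 1).choose (2 * i + 1))
            = (2 * j + 1).choose (2 * i + 1) * ((2 * n).choose (2 * d)) := by
          have h1 : 2 * (i + d) + 1 ≤ 2 * j + 1 := by omega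
          have h2 : 2 * i + 1 ≤ 2 * (i + d) + 1 := by omega
          have := Nat.choose_mul (n := 2 * j + 1) h2
          have e1 : 2 * j + 1 - (2 * i + 1) = 2 * n := by omega
          have e2 : 2 * (i + d) + 1 - (2 * i + 1) = 2 * d := by omega
          rw [e1, e2] at this
          exact this
        have hsymm : (2 * n).choose (2 * (n - d)) = (2 * n).choose (2 * d) := by
          have : 2 * (n - d) = 2 * n - 2 * d := by omega
          rw [this]
          exact Nat.choose_symm (by omega)
        have eE : 2 * j - 2 * (i + d) = 2 * (n - d) := by omega
        rw [eE, hsymm]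
        have keyQ : ((2 * j + 1).choose (2 * (i + d) + 1) : ℚ) *
            ((2 * (i + d) + 1).choose (2 * i + 1) : ℚ)
            = ((2 * j + 1).choose (2 * i + 1) : ℚ) * ((2 * n).choose (2 * d) : ℚ) := by
          exact_mod_cast congrArg (Nat.cast (R := ℚ)) key
        calc ((2 * (i + d) + 1).choose (2 * i + 1) : ℚ) *
              (((2 * j + 1).choose (2 * (i + d) + 1) : ℚ) * E (2 * (n - d)))
            = (((2 * j + 1).choose (2 * (i + d) + 1) : ℚ) *
              ((2 * (i + d) + 1).choose (2 * i + 1) : ℚ)) * E (2 * (n - d)) := by ring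
          _ = _ := by rw [keyQ]; ring
      rw [Finset.sum_congr rfl hcongr, ← Finset.mul_sum]
      have hrefl : ∑ d ∈ Finset.range (n + 1),
          ((2 * n).choose (2 * (n - d)) : ℚ) * E (2 * (n - d))
          = ∑ d ∈ Finset.range (n + 1), ((2 * n).choose (2 * d) : ℚ) * E (2 * d) := by
        have := Finset.sum_range_reflect
          (fun d => ((2 * n).choose (2 * d) : ℚ) * E (2 * d)) (n + 1)
        rw [← this]
        apply Finset.sum_congr rfl
        intro d hd
        simp only [Finset.mem_range] at hd
        congr 2 <;> omega
      rw [hrefl, hE n]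
      by_cases h : i = j
      · subst h
        simp [hn]
      · have : n ≠ 0 := by omega
        simp [this, h]
    · intro k hk hknot
      simp only [Finset.mem_range] at hk
      simp only [Finset.mem_Icc, not_and_or, not_le] at hknot
      rcases hknot with h | h
      · have : (2 * k + 1).choose (2 * i + 1) = 0 := Nat.choose_eq_zero_of_lt (by omega)
        simp [this]
      · have : (2 * j + 1).choose (2 * k + 1) = 0 := Nat.choose_eq_zero_of_lt (by omega)
        simp [this]
  · rw [if_neg (by omega)]
    apply Finset.sum_eq_zero
    intro k hk
    by_cases hki : k < i
    · have : (2 * k + 1).choose (2 * i + 1) = 0 := Nat.choose_eq_zero_of_lt (by omega)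
      simp [this]
    · have : (2 * j + 1).choose (2 * k + 1) = 0 := Nat.choose_eq_zero_of_lt (by omega)
      simp [this]

theorem odd_binomial_matrix_inverse (m : ℕ) (E : ℕ → ℚ)
    (hodd : ∀ n, E (2 * n + 1) = 0)
    (hE : ∀ n, ∑ k ∈ Finset.range (n + 1), ((2 * n).choose (2 * k) : ℚ) * E (2 * k)
      = if n = 0 then 1 else 0)
    (A B : Matrix (Fin (m + 1)) (Fin (m + 1)) ℚ)
    (hA : ∀ i j, A i j = ((2 * (j : ℕ) + 1).choose (2 * (i : ℕ) + 1) : ℚ))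
    (hB : ∀ i j, B i j = ((2 * (j : ℕ) + 1).choose (2 * (i : ℕ) + 1) : ℚ)
      * E (2 * (j : ℕ) - 2 * (i : ℕ))) :
    A * B = 1 ∧ B * A = 1 := by
  have hAB : A * B = 1 := by
    ext i j
    rw [Matrix.mul_apply]
    simp only [hA, hB]
    have := odd_binom_sum_lemma E hE m i j (by omega) (by omega)
    rw [← Fin.sum_univ_eq_sum_range
      (fun k => ((2 * k + 1).choose (2 * (i:ℕ) + 1) : ℚ) *
        (((2 * (j:ℕ) + 1).choose (2 * k + 1) : ℚ) * E (2 * (j:ℕ) - 2 * k))) (m+1)] at this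
    rw [this]
    simp [Matrix.one_apply, Fin.ext_iff, eq_comm]
  exact ⟨hAB, mul_eq_one_comm.mp hAB⟩
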